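/- For p an odd prime, let ∂_*: H_*(QΣCP^∞_+; F_p) → H_*(QS^0; F_p) be induced by the S^1-transfer, with Q(∂_*)(a_s) = (-1)^r βQ^rι if s = 2r(p-1)-1 and 0 otherwise. Then the image of Q(∂_*): QH_*(QΣCP^∞_+) → QH_*(QS^0) is exactly the span of all admissible monomials Q^Iι (with positive excess-plus-Bockstein) in which at least one Bockstein occurs. -/

import Mathlib

/-!
STATEMENT 11: (`p` odd) The image of `Q(∂_*): QH_*(QΣCP^∞_+) → QH_*(QS⁰)` — where
`Q(∂_*)(a_s) = (-1)^r βQ^rι` if `s = 2r(p-1) - 1` and `0` otherwise — is exactly the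
`F_p`-span of the admissible monomials `Q^Iι` with `e(I)+b(I) > 0` containing at least
one Bockstein.
-/

open scoped DirectSum

noncomputable section

variable (p : ℕ)

/-- Generators `β^εQ^s` of the Dyer–Lashof algebra: `(ε, s)` with `ε : Bool`. -/
abbrev DLGen : Type := Bool × ℕ

/-- The free associative `F_p`-algebra on the symbols `β^εQ^s`. -/
abbrev FreeO (p : ℕ) : Type := FreeAlgebra (ZMod p) DLGen

/-- The generator `β^εQ^s`. -/
def gen (p : ℕ) (ε : Bool) (s : ℕ) : FreeO p := FreeAlgebra.ι (ZMod p) (ε, s)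

/-- `deg β^εQ^s = 2s(p-1) - ε`. -/
def gdeg (p : ℕ) (g : DLGen) : ℤ := 2 * g.2 * ((p : ℤ) - 1) - (if g.1 then 1 else 0)

/-- The homogeneous component of degree `n` of the free algebra. -/
def HcompO (p : ℕ) (n : ℤ) : Submodule (ZMod p) (FreeO p) :=
  Submodule.span (ZMod p)
    {w | ∃ L : List DLGen, (L.map (gdeg p)).sum = n ∧
      w = (L.map fun g => gen p g.1 g.2).prod}

/-- The binomial coefficient `(i, j) = (i+j)!/(i!·j!)` mod `p`, zero if `i < 0` or `j < 0`. -/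
def bin (p : ℕ) (a b : ℤ) : ZMod p :=
  if 0 ≤ a ∧ 0 ≤ b then ((a + b).toNat.choose a.toNat : ZMod p) else 0

/-- The Adem elements `𝒜^{(ε,r,0,s)}`, `r > ps`. -/
def ademSetO1 (p : ℕ) : Set (FreeO p) :=
  {x | ∃ (ε : Bool) (r s : ℕ), p * s < r ∧
    x = gen p ε r * gen p false s -
      ∑ i ∈ Finset.range (r + s + 1),
        (((-1 : ZMod p) ^ (r + i)) *
          bin p ((p : ℤ) * i - r) ((r : ℤ) - ((p : ℤ) - 1) * s - i - 1)) •
          (gen p ε (r + s - i) * gen p false i)}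

/-- The Adem elements `𝒜^{(0,r,1,s)}`, `r ≥ ps`. -/
def ademSetO2 (p : ℕ) : Set (FreeO p) :=
  {x | ∃ (r s : ℕ), p * s ≤ r ∧
    x = gen p false r * gen p true s -
      (∑ i ∈ Finset.range (r + s + 1),
        (((-1 : ZMod p) ^ (r + i)) *
          bin p ((p : ℤ) * i - r) ((r : ℤ) - ((p : ℤ) - 1) * s - i)) •
          (gen p true (r + s - i) * gen p false i) -
       ∑ i ∈ Finset.range (r + s + 1),
        (((-1 : ZMod p) ^ (r + i)) *
          bin p ((p : ℤ) * i - r - 1) ((r : ℤ) - ((p : ℤ) - 1) * s - i)) •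
          (gen p false (r + s - i) * gen p true i))}

/-- The Adem elements `𝒜^{(1,r,1,s)}`, `r ≥ ps`. -/
def ademSetO3 (p : ℕ) : Set (FreeO p) :=
  {x | ∃ (r s : ℕ), p * s ≤ r ∧
    x = gen p true r * gen p true s +
      ∑ i ∈ Finset.range (r + s + 1),
        (((-1 : ZMod p) ^ (r + i)) *
          bin p ((p : ℤ) * i - r - 1) ((r : ℤ) - ((p : ℤ) - 1) * s - i)) •
          (gen p true (r + s - i) * gen p true i)}

/-- The unstable relations `β^εQ^s·x` for `2s - ε < deg x`, together with `βQ^0`. -/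
def unstableSetO (p : ℕ) : Set (FreeO p) :=
  {x | ∃ (ε : Bool) (s : ℕ) (n : ℤ) (w : FreeO p), w ∈ HcompO p n ∧
      2 * (s : ℤ) - (if ε then 1 else 0) < n ∧ x = gen p ε s * w} ∪
    {gen p true 0}

def dlRelO (p : ℕ) : FreeO p → FreeO p → Prop := fun x y =>
  (x ∈ ademSetO1 p ∪ ademSetO2 p ∪ ademSetO3 p ∪ unstableSetO p) ∧ y = 0

/-- The mod `p` Dyer–Lashof algebra. -/
abbrev DLO (p : ℕ) := RingQuot (dlRelO p)

def dlMkO (p : ℕ) : FreeO p →ₐ[ZMod p] DLO p := RingQuot.mkAlgHom (ZMod p) (dlRelO p)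

/-- Admissibility: `s_i ≤ p·s_{i-1} - ε_{i-1}`. -/
def AdmissibleO (p : ℕ) (L : List DLGen) : Prop :=
  List.Chain' (fun a b => (b.2 : ℤ) ≤ (p : ℤ) * a.2 - (if a.1 then 1 else 0)) L


/-- Excess `e(I)` of a monomial. -/
def excessO (p : ℕ) (L : List DLGen) : ℤ :=
  match L with
  | [] => 0
  | g :: t => 2 * g.2 - (if g.1 then 1 else 0) - (t.map (gdeg p)).sum

/-- `b(I) = ε₁`. -/
def bO (L : List DLGen) : ℤ :=
  match L with
  | [] => 0
  | g :: _ => if g.1 then 1 else 0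

/-- The free `Q`-unstable module `D'(F_p·a)` over the Dyer–Lashof algebra on one
generator `a` of degree `d`. -/
abbrev DmodO (p : ℕ) (d : ℤ) : Type :=
  DLO p ⧸ Submodule.span (DLO p)
    ({y : DLO p | ∃ (ε : Bool) (t : ℕ) (m : ℤ) (w : FreeO p), w ∈ HcompO p m ∧
        2 * (t : ℤ) - (if ε then 1 else 0) < m + d ∧ y = dlMkO p (gen p ε t * w)} ∪
     {y : DLO p | ∃ (t : ℕ) (m : ℤ) (w : FreeO p), w ∈ HcompO p m ∧
        2 * (t : ℤ) = m + d ∧ y = dlMkO p (gen p false t * w)})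

/-- `QH_*(QS⁰; F_p) = D'F_p` on the degree-zero generator `ι`. -/
abbrev NO (p : ℕ) : Type := DmodO p 0

def mkNO (p : ℕ) : DLO p → NO p := Submodule.Quotient.mk

/-- `QH_*(QΣCP^∞_+; F_p)`: the free `Q`-unstable module on generators `a_{2j+1}` of
degree `2j+1`, `j ≥ 0`. -/
abbrev MO (p : ℕ) : Type := ⨁ j : ℕ, DmodO p (2 * j + 1)

def aO (p : ℕ) (j : ℕ) : MO p :=
  DirectSum.of (fun j : ℕ => DmodO p (2 * j + 1)) j (Submodule.Quotient.mk 1)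

namespace S11

/-- Product of the word `L` in the free algebra. -/
def pw (p : ℕ) (L : List DLGen) : FreeO p := (L.map fun g => gen p g.1 g.2).prod

/-- Degree of the word `L`. -/
def dw (p : ℕ) (L : List DLGen) : ℤ := (L.map (gdeg p)).sum

@[simp] lemma pw_nil : pw p [] = 1 := rfl

@[simp] lemma pw_cons (g : DLGen) (L : List DLGen) :
    pw p (g :: L) = gen p g.1 g.2 * pw p L := by
  simp [pw]

@[simp] lemma pw_append (L M : List DLGen) :
    pw p (L ++ M) = pw p L * pw p M := by
  simp [pw]

@[simp] lemma dw_nil : dw p [] = 0 := rfl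

@[simp] lemma dw_cons (g : DLGen) (L : List DLGen) :
    dw p (g :: L) = gdeg p g + dw p L := by
  simp [dw]

@[simp] lemma dw_append (L M : List DLGen) :
    dw p (L ++ M) = dw p L + dw p M := by
  simp [dw]

lemma pw_mem_Hcomp (L : List DLGen) : pw p L ∈ HcompO p (dw p L) :=
  Submodule.subset_span ⟨L, rfl, rfl⟩

/-- Unstable kill in `DLO`. -/
lemma unstable_kill (ε : Bool) (s : ℕ) (L : List DLGen)
    (h : 2 * (s : ℤ) - (if ε then 1 else 0) < dw p L) :
    dlMkO p (gen p ε s * pw p L) = 0 := by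
  have hx : (gen p ε s * pw p L) ∈ unstableSetO p :=
    Or.inl ⟨ε, s, dw p L, pw p L, pw_mem_Hcomp p L, h, rfl⟩
  have hrel : dlRelO p (gen p ε s * pw p L) 0 := ⟨Or.inr hx, rfl⟩
  have := RingQuot.mkAlgHom_rel (ZMod p) hrel
  simpa [dlMkO] using this

lemma gen_true_zero_eq_zero : dlMkO p (gen p true 0) = 0 := by
  have := unstable_kill (p := p) true 0 []
  simpa using this (by norm_num)

end S11
namespace S11

lemma adem1_eq (ε : Bool) (r s : ℕ) (h : p * s < r) :
    dlMkO p (gen p ε r * gen p false s) =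
      ∑ i ∈ Finset.range (r + s + 1),
        (((-1 : ZMod p) ^ (r + i)) *
          bin p ((p : ℤ) * i - r) ((r : ℤ) - ((p : ℤ) - 1) * s - i - 1)) •
          dlMkO p (gen p ε (r + s - i) * gen p false i) := by
  have hx : (gen p ε r * gen p false s -
      ∑ i ∈ Finset.range (r + s + 1),
        (((-1 : ZMod p) ^ (r + i)) *
          bin p ((p : ℤ) * i - r) ((r : ℤ) - ((p : ℤ) - 1) * s - i - 1)) •
          (gen p ε (r + s - i) * gen p false i)) ∈ ademSetO1 p := ⟨ε, r, s, h, rfl⟩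
  have hrel : dlRelO p _ 0 := ⟨Or.inl (Or.inl (Or.inl hx)), rfl⟩
  have h0 := RingQuot.mkAlgHom_rel (ZMod p) hrel
  have h0' : dlMkO p _ = dlMkO p 0 := h0
  rw [map_zero, map_sub, sub_eq_zero, map_sum] at h0'
  simpa [map_smul] using h0'

lemma adem2_eq (r s : ℕ) (h : p * s ≤ r) :
    dlMkO p (gen p false r * gen p true s) =
      (∑ i ∈ Finset.range (r + s + 1),
        (((-1 : ZMod p) ^ (r + i)) *
          bin p ((p : ℤ) * i - r) ((r : ℤ) - ((p : ℤ) - 1) * s - i)) •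
          dlMkO p (gen p true (r + s - i) * gen p false i)) -
      (∑ i ∈ Finset.range (r + s + 1),
        (((-1 : ZMod p) ^ (r + i)) *
          bin p ((p : ℤ) * i - r - 1) ((r : ℤ) - ((p : ℤ) - 1) * s - i)) •
          dlMkO p (gen p false (r + s - i) * gen p true i)) := by
  have hx : (gen p false r * gen p true s -
      ((∑ i ∈ Finset.range (r + s + 1),
        (((-1 : ZMod p) ^ (r + i)) *
          bin p ((p : ℤ) * i - r) ((r : ℤ) - ((p : ℤ) - 1) * s - i)) •
          (gen p true (r + s - i) * gen p false i)) -
       ∑ i ∈ Finset.range (r + s + 1),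
        (((-1 : ZMod p) ^ (r + i)) *
          bin p ((p : ℤ) * i - r - 1) ((r : ℤ) - ((p : ℤ) - 1) * s - i)) •
          (gen p false (r + s - i) * gen p true i))) ∈ ademSetO2 p := ⟨r, s, h, rfl⟩
  have hrel : dlRelO p _ 0 := ⟨Or.inl (Or.inl (Or.inr hx)), rfl⟩
  have h0 := RingQuot.mkAlgHom_rel (ZMod p) hrel
  have h0' : dlMkO p _ = dlMkO p 0 := h0
  rw [map_zero, map_sub, sub_eq_zero] at h0'
  rw [h0', map_sub, map_sum, map_sum]
  simp [map_smul]

lemma bin_zero_left (y : ℤ) (hy : 0 ≤ y) : bin p 0 y = 1 := by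
  simp [bin, hy]

lemma bin_eq_zero_of_neg_left {a : ℤ} (b : ℤ) (ha : a < 0) : bin p a b = 0 := by
  have hn : ¬(0 ≤ a ∧ 0 ≤ b) := by rintro ⟨h1, -⟩; omega
  simp [bin, hn]

lemma nonneg_of_bin_ne_zero {a b : ℤ} (h : bin p a b ≠ 0) : 0 ≤ a ∧ 0 ≤ b := by
  by_contra hc
  exact h (by simp [bin, hc])

end S11
namespace S11

/-- Span of the elements `Q^a βQ^b`, `a + b = n`. -/
def UU (p : ℕ) (n : ℕ) : Submodule (ZMod p) (DLO p) :=
  Submodule.span (ZMod p)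
    {x : DLO p | ∃ a b : ℕ, a + b = n ∧ x = dlMkO p (gen p false a * gen p true b)}

lemma unstable_kill_one (ε : Bool) (s : ℕ) (g : DLGen)
    (h : 2 * (s : ℤ) - (if ε then 1 else 0) < gdeg p g) :
    dlMkO p (gen p ε s * gen p g.1 g.2) = 0 := by
  have := unstable_kill (p := p) ε s [g] (by simpa using h)
  simpa using this

lemma twoLetter (hp3 : 3 ≤ p) (hodd : Odd p) (n : ℕ) :
    ∀ s t : ℕ, s + t = n → dlMkO p (gen p true s * gen p false t) ∈ UU p n := by
  intro s
  induction s using Nat.strong_induction_on with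
  | _ s IH =>
    intro t hst
    have hp1 : 1 ≤ p := by omega
    have e1 : (p - 1) * t + t = p * t := by
      rw [Nat.sub_mul, one_mul,
        Nat.sub_add_cancel (Nat.le_mul_of_pos_left t (by omega))]
    by_cases hdead : s ≤ (p - 1) * t
    · -- unstable: the element is zero
      have hz : dlMkO p (gen p true s * gen p false t) = 0 := by
        apply unstable_kill_one p true s (false, t)
        have hcast : (((p - 1) * t : ℕ) : ℤ) = ((p : ℤ) - 1) * t := by
          push_cast [Nat.cast_sub hp1]; ring
        have : (s : ℤ) ≤ ((p : ℤ) - 1) * t := by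
          rw [← hcast]; exact_mod_cast hdead
        simp only [gdeg]
        simp only [if_true, if_false]
        push_cast
        nlinarith [this]
      rw [hz]; exact zero_mem _
    · push_neg at hdead
      by_cases hadem1 : p * t < s
      · -- Adem type 1
        rw [adem1_eq p true s t hadem1]
        apply Submodule.sum_mem
        intro i hi
        simp only [Finset.mem_range] at hi
        by_cases hbin : bin p ((p : ℤ) * i - s) ((s : ℤ) - ((p : ℤ) - 1) * t - i - 1) = 0
        · rw [hbin, mul_zero, zero_smul]; exact zero_mem _
        · obtain ⟨h1, -⟩ := nonneg_of_bin_ne_zero p hbin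
          have hit : t < i := by
            by_contra hle
            push_neg at hle
            have : (p : ℤ) * i ≤ (p : ℤ) * t := by
              apply mul_le_mul_of_nonneg_left (by exact_mod_cast hle) (by positivity)
            have hst' : ((p * t : ℕ) : ℤ) < (s : ℕ) := by exact_mod_cast hadem1
            push_cast at hst'
            omega
          exact Submodule.smul_mem _ _ (IH (s + t - i) (by omega) i (by omega))
      · -- Adem type 2 with r = p t, u = s - (p-1) t
        push_neg at hadem1
        set r := p * t with hr
        set u := s - (p - 1) * t with hu
        have hus : u + (p - 1) * t = s := by omega
        have hut : u ≤ t := by omega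
        have hru : r + u = n := by omega
        have hcond : p * u ≤ r := Nat.mul_le_mul_left p hut
        have key := adem2_eq p r u hcond
        have hcast : (((p - 1) * t : ℕ) : ℤ) = ((p : ℤ) - 1) * t := by
          push_cast [Nat.cast_sub hp1]; ring
        have hS1 : (∑ i ∈ Finset.range (r + u + 1),
            (((-1 : ZMod p) ^ (r + i)) *
              bin p ((p : ℤ) * i - r) ((r : ℤ) - ((p : ℤ) - 1) * u - i)) •
              dlMkO p (gen p true (r + u - i) * gen p false i)) ∈ UU p n := by
          have heq : (∑ i ∈ Finset.range (r + u + 1),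
              (((-1 : ZMod p) ^ (r + i)) *
                bin p ((p : ℤ) * i - r) ((r : ℤ) - ((p : ℤ) - 1) * u - i)) •
                dlMkO p (gen p true (r + u - i) * gen p false i)) =
              dlMkO p (gen p false r * gen p true u) +
              ∑ i ∈ Finset.range (r + u + 1),
                (((-1 : ZMod p) ^ (r + i)) *
                  bin p ((p : ℤ) * i - r - 1) ((r : ℤ) - ((p : ℤ) - 1) * u - i)) •
                  dlMkO p (gen p false (r + u - i) * gen p true i) := by
            rw [key]; abel
          rw [heq]
          refine Submodule.add_mem _ (Submodule.subset_span ⟨r, u, hru, rfl⟩) ?_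
          refine Submodule.sum_mem _ fun i hi => Submodule.smul_mem _ _ ?_
          simp only [Finset.mem_range] at hi
          exact Submodule.subset_span ⟨r + u - i, i, by omega, rfl⟩
        have htmem : t ∈ Finset.range (r + u + 1) := by
          simp only [Finset.mem_range]; omega
        rw [← Finset.add_sum_erase _ _ htmem] at hS1
        have hrest : (∑ i ∈ (Finset.range (r + u + 1)).erase t,
            (((-1 : ZMod p) ^ (r + i)) *
              bin p ((p : ℤ) * i - r) ((r : ℤ) - ((p : ℤ) - 1) * u - i)) •
              dlMkO p (gen p true (r + u - i) * gen p false i)) ∈ UU p n := by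
          refine Submodule.sum_mem _ fun i hi => ?_
          simp only [Finset.mem_erase, Finset.mem_range] at hi
          obtain ⟨hit, hilt⟩ := hi
          rcases lt_or_gt_of_ne hit with hlt | hgt
          · have : ((p : ℤ) * i - r) < 0 := by
              have : (p : ℤ) * i < (p : ℤ) * t := by
                apply mul_lt_mul_of_pos_left (by exact_mod_cast hlt) (by positivity)
              have : ((r : ℕ) : ℤ) = (p : ℤ) * t := by rw [hr]; push_cast; ring
              omega
            rw [bin_eq_zero_of_neg_left p _ this, mul_zero, zero_smul]
            exact zero_mem _
          · exact Submodule.smul_mem _ _ (IH (r + u - i) (by omega) i (by omega))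
        have hmain := Submodule.sub_mem _ hS1 hrest
        rw [add_sub_cancel_right] at hmain
        have hcoef : ((-1 : ZMod p) ^ (r + t)) *
            bin p ((p : ℤ) * t - r) ((r : ℤ) - ((p : ℤ) - 1) * u - t) = 1 := by
          have h1 : ((p : ℤ) * t - r) = 0 := by rw [hr]; push_cast; ring
          have h2 : (0 : ℤ) ≤ (r : ℤ) - ((p : ℤ) - 1) * u - t := by
            have hrz : ((r : ℕ) : ℤ) = (p : ℤ) * t := by rw [hr]; push_cast; ring
            have huz : (u : ℤ) ≤ (t : ℤ) := by exact_mod_cast hut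
            have hp3' : (3 : ℤ) ≤ (p : ℤ) := by exact_mod_cast hp3
            nlinarith [huz, hp3']
          rw [h1, bin_zero_left p _ h2]
          have : (-1 : ZMod p) ^ (r + t) = ((-1 : ZMod p) ^ (p + 1)) ^ t := by
            rw [← pow_mul]
            congr 1
            rw [hr]; ring
          rw [this, Even.neg_one_pow (by exact Odd.add_one hodd), one_pow, mul_one]
        rw [hcoef, one_smul] at hmain
        have hfin : r + u - t = s := by omega
        rw [hfin] at hmain
        exact hmain

end S11
namespace S11

/-- The left ideal generated by the `βQ^r`. -/
def LL (p : ℕ) : Submodule (DLO p) (DLO p) :=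
  Submodule.span (DLO p) (Set.range fun r : ℕ => dlMkO p (gen p true r))

lemma mul_gen_mem_LL (x : DLO p) (r : ℕ) : x * dlMkO p (gen p true r) ∈ LL p := by
  have h : dlMkO p (gen p true r) ∈ LL p := Submodule.subset_span ⟨r, rfl⟩
  simpa [smul_eq_mul] using Submodule.smul_mem (LL p) x h

lemma zsmul_mem_LL (c : ZMod p) {x : DLO p} (hx : x ∈ LL p) : c • x ∈ LL p := by
  rw [Algebra.smul_def]
  simpa [smul_eq_mul] using
    Submodule.smul_mem (LL p) (algebraMap (ZMod p) (DLO p) c) hx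

lemma bword (hp3 : 3 ≤ p) (hodd : Odd p) :
    ∀ (v u : List DLGen) (s : ℕ), dlMkO p (pw p (u ++ (true, s) :: v)) ∈ LL p := by
  intro v
  induction v with
  | nil =>
    intro u s
    have hrw : pw p (u ++ [((true : Bool), s)]) = pw p u * gen p true s := by
      simp [pw_append]
    rw [hrw, map_mul]
    exact mul_gen_mem_LL p _ s
  | cons g v IH =>
    intro u s
    obtain ⟨ε, t⟩ := g
    cases ε
    · -- g = (false, t): use the two-letter lemma
      have h2 := twoLetter p hp3 hodd (s + t) s t rfl
      have hrw : pw p (u ++ (true, s) :: (false, t) :: v) =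
          pw p u * ((gen p true s * gen p false t) * pw p v) := by
        simp [pw_append, mul_assoc]
      rw [hrw, map_mul, map_mul]
      refine Submodule.span_induction
        (p := fun x _ => dlMkO p (pw p u) * (x * dlMkO p (pw p v)) ∈ LL p)
        ?_ ?_ ?_ ?_ h2
      · rintro x ⟨a, b, hab, rfl⟩
        have hrw2 : dlMkO p (pw p u) * (dlMkO p (gen p false a * gen p true b) *
            dlMkO p (pw p v)) =
            dlMkO p (pw p ((u ++ [((false : Bool), a)]) ++ (true, b) :: v)) := by
          rw [← map_mul, ← map_mul]
          congr 1
          simp [pw_append, mul_assoc]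
        rw [hrw2]
        exact IH _ _
      · simp only [zero_mul, mul_zero]; exact zero_mem _
      · intro x y hx hy hx' hy'
        rw [add_mul, mul_add]
        exact add_mem hx' hy'
      · intro c x hx hx'
        rw [smul_mul_assoc, mul_smul_comm]
        exact zsmul_mem_LL p c hx'
    · -- g = (true, t): re-associate and recurse
      have hrw : u ++ (true, s) :: (true, t) :: v =
          (u ++ [((true : Bool), s)]) ++ (true, t) :: v := by simp
      rw [hrw]
      exact IH _ _

end S11
namespace S11

def Cond1 (p : ℕ) (W : List DLGen) : Prop :=
  ∃ (u : List DLGen) (g : DLGen) (v w : List DLGen),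
    W = u ++ g :: (v ++ w) ∧ 2 * (g.2 : ℤ) - (if g.1 then 1 else 0) < dw p v

def Cond2 (p : ℕ) (W : List DLGen) : Prop :=
  ∃ (u : List DLGen) (g : DLGen) (v : List DLGen),
    W = u ++ g :: v ∧ g.1 = false ∧ dw p v = 2 * (g.2 : ℤ)

lemma kill1 {W : List DLGen} (h : Cond1 p W) : dlMkO p (pw p W) = 0 := by
  obtain ⟨u, g, v, w, rfl, hlt⟩ := h
  have hrw : pw p (u ++ g :: (v ++ w)) =
      pw p u * ((gen p g.1 g.2 * pw p v) * pw p w) := by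
    simp [pw_append, mul_assoc]
  rw [hrw, map_mul, map_mul, unstable_kill p g.1 g.2 v hlt, zero_mul, mul_zero]

/-- The submodule defining `DmodO`, as a standalone definition. -/
def Nsub (p : ℕ) (d : ℤ) : Submodule (DLO p) (DLO p) :=
  Submodule.span (DLO p)
    ({y : DLO p | ∃ (ε : Bool) (t : ℕ) (m : ℤ) (w : FreeO p), w ∈ HcompO p m ∧
        2 * (t : ℤ) - (if ε then 1 else 0) < m + d ∧ y = dlMkO p (gen p ε t * w)} ∪
     {y : DLO p | ∃ (t : ℕ) (m : ℤ) (w : FreeO p), w ∈ HcompO p m ∧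
        2 * (t : ℤ) = m + d ∧ y = dlMkO p (gen p false t * w)})

lemma mkNO_eq_mkQ (x : DLO p) : mkNO p x = (Nsub p 0).mkQ x := rfl

lemma mkNO_eq_zero {x : DLO p} (h : x ∈ Nsub p 0) : mkNO p x = 0 := by
  rw [mkNO_eq_mkQ, Submodule.mkQ_apply]
  exact (Submodule.Quotient.mk_eq_zero _).mpr h

lemma mkNO_mul (x y : DLO p) : mkNO p (x * y) = x • mkNO p y := by
  rw [mkNO_eq_mkQ, mkNO_eq_mkQ, ← smul_eq_mul]
  exact map_smul ((Nsub p 0).mkQ) x y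

lemma kill2 {W : List DLGen} (h : Cond2 p W) : mkNO p (dlMkO p (pw p W)) = 0 := by
  obtain ⟨u, g, v, rfl, hg1, hdeg⟩ := h
  have hrw : pw p (u ++ g :: v) = pw p u * (gen p g.1 g.2 * pw p v) := by
    simp [pw_append]
  have hmem : dlMkO p (gen p g.1 g.2 * pw p v) ∈ Nsub p 0 := by
    apply Submodule.subset_span
    refine Or.inr ⟨g.2, dw p v, pw p v, pw_mem_Hcomp p v, by omega, by rw [hg1]⟩
  rw [hrw, map_mul, mkNO_mul]
  rw [mkNO_eq_zero p hmem, smul_zero]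

lemma adm_arith (hp3 : 3 ≤ p) (A B εa εb : ℤ) (hA : 0 ≤ A) (hB : 0 ≤ B)
    (hεa : εa = 0 ∨ εa = 1) (hεb : εb = 0 ∨ εb = 1)
    (h1 : 2 * B * ((p : ℤ) - 1) - εb ≤ 2 * A - εa)
    (h2 : εa = 1 → 1 ≤ A) : B ≤ (p : ℤ) * A - εa := by
  have hp' : (3 : ℤ) ≤ (p : ℤ) := by exact_mod_cast hp3
  have k1 : 4 * B ≤ 2 * B * ((p : ℤ) - 1) := by nlinarith
  have k1' : 4 * B ≤ 2 * A - εa + εb := by linarith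
  have h2B : 2 * B ≤ A := by omega
  have k2 : 3 * A ≤ (p : ℤ) * A := by nlinarith
  rcases eq_or_lt_of_le hA with hA0 | hA1
  · have hB0 : B = 0 := by omega
    have hεa0 : εa = 0 := by
      rcases hεa with h | h
      · exact h
      · exfalso; omega
    rw [hB0, hεa0, ← hA0]
    simp
  · have hA1' : 1 ≤ A := hA1
    have : B ≤ A := by omega
    have : A ≤ 3 * A - 1 := by omega
    omega

lemma cond1_tail {a : DLGen} {W : List DLGen} (h : Cond1 p W) :
    Cond1 p (a :: W) := by
  obtain ⟨u, g, v, w, rfl, hlt⟩ := h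
  exact ⟨a :: u, g, v, w, rfl, hlt⟩

lemma adm_of_notCond1 (hp3 : 3 ≤ p) :
    ∀ W : List DLGen, ¬ Cond1 p W → AdmissibleO p W := by
  intro W
  induction W with
  | nil => intro _; exact List.isChain_nil
  | cons a T IH =>
    intro hC
    cases T with
    | nil => exact List.isChain_singleton a
    | cons b T' =>
      refine List.isChain_cons_cons.mpr ⟨?_, IH (fun h => hC (cond1_tail p h))⟩
      -- arithmetic for the adjacent pair
      have h1 : ¬ (2 * (a.2 : ℤ) - (if a.1 then 1 else 0) < dw p [b]) := by
        intro hlt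
        exact hC ⟨[], a, [b], T', by simp, hlt⟩
      have ha0 : a.1 = true → 1 ≤ a.2 := by
        intro hat
        by_contra hlt
        apply hC
        refine ⟨[], a, [], b :: T', by simp, ?_⟩
        rw [hat]
        simp only [dw_nil, if_true]
        omega
      push_neg at h1
      rw [dw_cons, dw_nil, add_zero] at h1
      simp only [gdeg] at h1
      have := adm_arith p hp3 (a.2 : ℤ) (b.2 : ℤ)
        (if a.1 then 1 else 0) (if b.1 then 1 else 0)
        (by positivity) (by positivity)
        (by cases a.1 <;> simp) (by cases b.1 <;> simp)
        (by exact_mod_cast h1)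
        (by
          intro hεa1
          have hat : a.1 = true := by
            by_contra hf
            simp only [Bool.not_eq_true] at hf
            rw [hf] at hεa1; simp at hεa1
          exact_mod_cast ha0 hat)
      exact this

lemma pos_excess (g : DLGen) (T : List DLGen)
    (h1 : ¬ Cond1 p (g :: T)) (h2 : ¬ Cond2 p (g :: T)) :
    0 < excessO p (g :: T) + bO (g :: T) := by
  obtain ⟨ε, k⟩ := g
  have hd : ¬ (2 * (k : ℤ) - (if ε then 1 else 0) < dw p T) := by
    intro hlt
    exact h1 ⟨[], (ε, k), T, [], by simp, hlt⟩
  push_neg at hd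
  have hne : ε = false → dw p T ≠ 2 * (k : ℤ) := by
    intro hgf heq
    exact h2 ⟨[], (ε, k), T, rfl, hgf, heq⟩
  have hex : excessO p ((ε, k) :: T) =
      2 * (k : ℤ) - (if ε then 1 else 0) - dw p T := rfl
  have hb : bO ((ε, k) :: T) = (if ε then 1 else 0) := rfl
  rw [hex, hb]
  clear hex hb
  cases ε
  · have hne' := hne rfl
    simp only [Bool.false_eq_true, if_false] at hd ⊢
    omega
  · simp only [if_true] at hd ⊢
    omega

end S11
namespace S11
open scoped Pointwise

lemma keyA (hp3 : 3 ≤ p) (W : List DLGen) (hβ : ∃ g ∈ W, g.1 = true) :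
    mkNO p (dlMkO p (pw p W)) ∈ Submodule.span (ZMod p)
      {x : NO p | ∃ L : List DLGen, AdmissibleO p L ∧ (∃ g ∈ L, g.1 = true) ∧
        0 < excessO p L + bO L ∧
        x = mkNO p (dlMkO p ((L.map fun g => gen p g.1 g.2).prod))} := by
  classical
  by_cases hc1 : Cond1 p W
  · rw [kill1 p hc1]
    have h0 : mkNO p 0 = 0 := Submodule.Quotient.mk_zero _
    rw [h0]
    exact Submodule.zero_mem _
  by_cases hc2 : Cond2 p W
  · rw [kill2 p hc2]
    exact Submodule.zero_mem _
  · apply Submodule.subset_span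
    cases W with
    | nil =>
      obtain ⟨g, hg, -⟩ := hβ
      exact absurd hg List.not_mem_nil
    | cons g T =>
      exact ⟨g :: T, adm_of_notCond1 p hp3 _ hc1, hβ,
        pos_excess p g T hc1 hc2, rfl⟩

def Mset (p : ℕ) : Set (FreeO p) := {w | ∃ L : List DLGen, w = pw p L}

lemma span_Mset_eq_top : Submodule.span (ZMod p) (Mset p) = ⊤ := by
  have h1 : (1 : FreeO p) ∈ Submodule.span (ZMod p) (Mset p) :=
    Submodule.subset_span ⟨[], rfl⟩
  have hmulset : Mset p * Mset p ⊆ Mset p := by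
    rintro z ⟨a, ha, b, hb, rfl⟩
    obtain ⟨L1, rfl⟩ := ha
    obtain ⟨L2, rfl⟩ := hb
    exact ⟨L1 ++ L2, by simp⟩
  have hmul : ∀ x y : FreeO p, x ∈ Submodule.span (ZMod p) (Mset p) →
      y ∈ Submodule.span (ZMod p) (Mset p) →
      x * y ∈ Submodule.span (ZMod p) (Mset p) := by
    intro x y hx hy
    have hxy : x * y ∈ Submodule.span (ZMod p) (Mset p) *
        Submodule.span (ZMod p) (Mset p) := Submodule.mul_mem_mul hx hy
    rw [Submodule.span_mul_span] at hxy
    exact Submodule.span_le.mpr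
      (le_trans hmulset Submodule.subset_span) hxy
  let S : Subalgebra (ZMod p) (FreeO p) :=
    (Submodule.span (ZMod p) (Mset p)).toSubalgebra h1 hmul
  have hS : S = ⊤ := by
    rw [eq_top_iff, ← FreeAlgebra.adjoin_range_ι (ZMod p) DLGen]
    apply Algebra.adjoin_le
    rintro x ⟨g, rfl⟩
    show FreeAlgebra.ι (ZMod p) g ∈ Submodule.span (ZMod p) (Mset p)
    exact Submodule.subset_span ⟨[g], by simp [pw, gen]⟩
  have := congrArg Subalgebra.toSubmodule hS
  rw [Submodule.toSubalgebra_toSubmodule] at this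
  rw [this]
  rfl

lemma zsmul_mkNO (c : ZMod p) (x : DLO p) :
    c • mkNO p x = mkNO p (algebraMap (ZMod p) (DLO p) c * x) := by
  show c • Submodule.Quotient.mk x = Submodule.Quotient.mk _
  rw [← Submodule.Quotient.mk_smul, Algebra.smul_def]

lemma NO_alg_smul (c : ZMod p) (y : NO p) :
    (algebraMap (ZMod p) (DLO p) c) • y = c • y := by
  obtain ⟨x, rfl⟩ := Submodule.Quotient.mk_surjective _ y
  have h1 := zsmul_mkNO p c x
  have h2 := mkNO_mul p (algebraMap (ZMod p) (DLO p) c) x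
  show (algebraMap (ZMod p) (DLO p) c) • mkNO p x = c • mkNO p x
  rw [h1, ← h2]

end S11
theorem transfer_image_is_span_of_bockstein_monomials
    (p : ℕ) [Fact p.Prime] (hp : Odd p)
    (f : MO p →ₗ[DLO p] NO p)
    (hf : ∀ j r : ℕ, (j : ℤ) + 1 = r * ((p : ℤ) - 1) →
      f (aO p j) = ((-1 : ZMod p) ^ r) • mkNO p (dlMkO p (gen p true r)))
    (hf0 : ∀ j : ℕ, (¬ ∃ r : ℕ, (j : ℤ) + 1 = r * ((p : ℤ) - 1)) → f (aO p j) = 0) :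
    (LinearMap.range f : Set (NO p)) =
      (Submodule.span (ZMod p)
        {x : NO p | ∃ L : List DLGen, AdmissibleO p L ∧ (∃ g ∈ L, g.1 = true) ∧
          0 < excessO p L + bO L ∧
          x = mkNO p (dlMkO p ((L.map fun g => gen p g.1 g.2).prod))} : Set (NO p)) := by
  classical
  have hprime : p.Prime := Fact.out
  have hp3 : 3 ≤ p := by
    have h2 := hprime.two_le
    rcases hp with ⟨k, hk⟩
    omega
  -- each βQ^r generator lands in the range of f
  have hgenr : ∀ r : ℕ, mkNO p (dlMkO p (gen p true r)) ∈ LinearMap.range f := by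
    intro r
    cases r with
    | zero =>
      rw [S11.gen_true_zero_eq_zero p]
      have h0 : mkNO p (0 : DLO p) = 0 := Submodule.Quotient.mk_zero _
      rw [h0]
      exact Submodule.zero_mem _
    | succ r' =>
      set r := r' + 1 with hrdef
      have hj1 : 1 ≤ r * (p - 1) := by
        have h1 : 1 ≤ p - 1 := by omega
        calc 1 = 1 * 1 := by ring
        _ ≤ r * (p - 1) := Nat.mul_le_mul (by omega) h1
      set j := r * (p - 1) - 1 with hjdef
      have hj : (j : ℤ) + 1 = r * ((p : ℤ) - 1) := by
        have h1 : ((r * (p - 1) : ℕ) : ℤ) = (r : ℤ) * ((p : ℤ) - 1) := by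
          push_cast [Nat.cast_sub (by omega : 1 ≤ p)]; ring
        have h2 : ((j : ℕ) : ℤ) = ((r * (p - 1) : ℕ) : ℤ) - 1 := by
          rw [hjdef]; push_cast [Nat.cast_sub hj1]; ring
        rw [h2, h1]; ring
      have hfa := hf j r hj
      have hcc : ((-1 : ZMod p) ^ r) * ((-1 : ZMod p) ^ r) = 1 := by
        rw [← pow_add]
        exact Even.neg_one_pow ⟨r, by ring⟩
      refine ⟨(algebraMap (ZMod p) (DLO p) ((-1 : ZMod p) ^ r)) • aO p j, ?_⟩
      rw [map_smul, hfa, S11.zsmul_mkNO p, ← S11.mkNO_mul p, ← mul_assoc,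
        ← map_mul, hcc, map_one, one_mul]
  have hLLrange : ∀ x ∈ S11.LL p, mkNO p x ∈ LinearMap.range f := by
    have hle : S11.LL p ≤ (LinearMap.range f).comap ((S11.Nsub p 0).mkQ) := by
      rw [S11.LL]
      apply Submodule.span_le.mpr
      rintro y ⟨r, rfl⟩
      exact hgenr r
    intro x hx
    exact hle hx
  apply Set.Subset.antisymm
  · -- range f ⊆ span
    rintro y ⟨x, rfl⟩
    refine DirectSum.induction_on x ?_ ?_ ?_
    · rw [map_zero]; exact Submodule.zero_mem _
    · intro j m
      obtain ⟨y0, rfl⟩ := Submodule.Quotient.mk_surjective _ m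
      obtain ⟨z, rfl⟩ := RingQuot.mkAlgHom_surjective (ZMod p) (dlRelO p) y0
      have hz : z ∈ Submodule.span (ZMod p) (S11.Mset p) := by
        rw [S11.span_Mset_eq_top p]; exact Submodule.mem_top
      refine Submodule.span_induction
        (p := fun z _ => f (DirectSum.of (fun j : ℕ => DmodO p (2 * j + 1)) j
          (Submodule.Quotient.mk (RingQuot.mkAlgHom (ZMod p) (dlRelO p) z)))
            ∈ Submodule.span (ZMod p)
        {x : NO p | ∃ L : List DLGen, AdmissibleO p L ∧ (∃ g ∈ L, g.1 = true) ∧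
          0 < excessO p L + bO L ∧
          x = mkNO p (dlMkO p ((L.map fun g => gen p g.1 g.2).prod))})
        ?_ ?_ ?_ ?_ hz
      · intro z hzm
        obtain ⟨L, hL⟩ := hzm
        rw [hL]
        have hmk : (Submodule.Quotient.mk
              (RingQuot.mkAlgHom (ZMod p) (dlRelO p) (S11.pw p L))
            : DmodO p (2 * j + 1)) =
            (dlMkO p (S11.pw p L)) • Submodule.Quotient.mk 1 := by
          rw [← Submodule.Quotient.mk_smul, smul_eq_mul, mul_one]
          rfl
        rw [hmk, ← DirectSum.lof_eq_of (DLO p), map_smul, map_smul,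
          DirectSum.lof_eq_of (DLO p)]
        rw [show (DirectSum.of (fun j : ℕ => DmodO p (2 * j + 1)) j
            (Submodule.Quotient.mk 1) : MO p) = aO p j from rfl]
        by_cases hr : ∃ r : ℕ, (j : ℤ) + 1 = r * ((p : ℤ) - 1)
        · obtain ⟨r, hrj⟩ := hr
          rw [hf j r hrj]
          rw [S11.zsmul_mkNO p, ← S11.mkNO_mul p]
          have hcomm : dlMkO p (S11.pw p L) *
              ((algebraMap (ZMod p) (DLO p) ((-1 : ZMod p) ^ r)) *
                dlMkO p (gen p true r)) =
              (algebraMap (ZMod p) (DLO p) ((-1 : ZMod p) ^ r)) *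
                (dlMkO p (S11.pw p L) * dlMkO p (gen p true r)) := by
            rw [← mul_assoc, ← Algebra.commutes, mul_assoc]
          rw [hcomm, ← S11.zsmul_mkNO p]
          have hW : dlMkO p (S11.pw p L) * dlMkO p (gen p true r) =
              dlMkO p (S11.pw p (L ++ [((true : Bool), r)])) := by
            rw [← map_mul]
            congr 1
            simp [S11.pw_append]
          rw [hW]
          exact Submodule.smul_mem _ _
            (S11.keyA p hp3 (L ++ [((true : Bool), r)]) ⟨(true, r), by simp, rfl⟩)
        · rw [hf0 j hr, smul_zero]
          exact Submodule.zero_mem _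
      · rw [map_zero, Submodule.Quotient.mk_zero, map_zero, map_zero]
        exact Submodule.zero_mem _
      · intro a b ha hb ha' hb'
        rw [map_add, Submodule.Quotient.mk_add, map_add, map_add]
        exact Submodule.add_mem _ ha' hb'
      · intro c x hx hx'
        have h1 : RingQuot.mkAlgHom (ZMod p) (dlRelO p) (c • x) =
            (algebraMap (ZMod p) (DLO p) c) *
              RingQuot.mkAlgHom (ZMod p) (dlRelO p) x := by
          rw [map_smul, Algebra.smul_def]
        have h2 : (Submodule.Quotient.mk
              ((algebraMap (ZMod p) (DLO p) c) *
                RingQuot.mkAlgHom (ZMod p) (dlRelO p) x) : DmodO p (2 * j + 1)) =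
            (algebraMap (ZMod p) (DLO p) c) •
              Submodule.Quotient.mk (RingQuot.mkAlgHom (ZMod p) (dlRelO p) x) := by
          rw [← Submodule.Quotient.mk_smul, smul_eq_mul]
        rw [h1, h2, ← DirectSum.lof_eq_of (DLO p), map_smul, map_smul,
          DirectSum.lof_eq_of (DLO p), S11.NO_alg_smul p]
        exact Submodule.smul_mem _ _ hx'
    · intro a b ha hb
      rw [map_add]
      exact Submodule.add_mem _ ha hb
  · -- span ⊆ range f
    intro y hy
    let R0 : Submodule (ZMod p) (NO p) :=
      { carrier := (LinearMap.range f : Set (NO p))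
        add_mem' := fun ha hb => add_mem ha hb
        zero_mem' := zero_mem _
        smul_mem' := fun c y hy => by
          rw [← S11.NO_alg_smul p c y]
          exact Submodule.smul_mem _ _ hy }
    have hsub : {x : NO p | ∃ L : List DLGen, AdmissibleO p L ∧
        (∃ g ∈ L, g.1 = true) ∧ 0 < excessO p L + bO L ∧
        x = mkNO p (dlMkO p ((L.map fun g => gen p g.1 g.2).prod))} ⊆ R0 := by
      rintro x ⟨L, hadm, ⟨g, hgL, hgt⟩, hpos, rfl⟩
      obtain ⟨u, v, rfl⟩ := List.append_of_mem hgL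
      obtain ⟨ε, s⟩ := g
      cases hgt
      exact hLLrange _ (S11.bword p hp3 hp v u s)
    exact Submodule.span_le.mpr hsub hy

end
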